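/- Let f: X → Y be a surjective holomorphic map of compact Kähler manifolds of positive dimension, and let T be a closed positive current of bidimension (1,1) on X whose class [T] lies in the interior of the dual Kähler cone K*(X). Then [f_*T] lies in the interior of K*(Y). -/

import Mathlib

set_option synthInstance.maxHeartbeats 400000
set_option maxHeartbeats 1000000


/-- **Pushforward of interior points of the dual Kähler cone.**
Let `f : X → Y` be a surjective holomorphic map of compact Kähler manifolds of
positive dimension.  We model `H²(X,ℝ)` and `H²(Y,ℝ)` by finite-dimensional real
vector spaces `V` and `W`, the Kähler cones `KX ⊂ V`, `KY ⊂ W` by nonempty open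
convex cones, and the pullback `f* : H²(Y,ℝ) → H²(X,ℝ)` by an injective linear map
carrying `closure KY` into `closure KX` (both hold since `f` is surjective).
A class in `H^{n-1,n-1}` is identified with the linear functional it induces on
`H^{1,1}` via the perfect cup-product pairing; the dual Kähler cone is the set of
functionals nonnegative on the closed Kähler cone, and the pushforward of the class
`[T]` of a closed positive `(1,1)`-bidimensional current `T` is `T ∘ f*`.
If `[T]` lies in the interior of `K*(X)`, then `[f_*T]` lies in the interior of
`K*(Y)`. -/
theorem pushforward_interior_dual_kahler_cone
    {V W : Type*} [NormedAddCommGroup V] [NormedSpace ℝ V] [FiniteDimensional ℝ V]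
    [NormedAddCommGroup W] [NormedSpace ℝ W] [FiniteDimensional ℝ W]
    (KX : Set V) (hKXopen : IsOpen KX) (hKXconv : Convex ℝ KX) (hKXne : KX.Nonempty)
    (hKXcone : ∀ x ∈ KX, ∀ t : ℝ, 0 < t → t • x ∈ KX)
    (KY : Set W) (hKYopen : IsOpen KY) (hKYconv : Convex ℝ KY) (hKYne : KY.Nonempty)
    (hKYcone : ∀ x ∈ KY, ∀ t : ℝ, 0 < t → t • x ∈ KY)
    (fstar : W →L[ℝ] V)                               -- the pullback f*
    (hinj : Function.Injective fstar)
    (hmaps : ∀ β ∈ closure KY, fstar β ∈ closure KX)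
    (T : V →L[ℝ] ℝ)                                   -- the class [T]
    (hT : T ∈ interior {S : V →L[ℝ] ℝ | ∀ β ∈ closure KX, 0 ≤ S β}) :
    T.comp fstar ∈ interior {S : W →L[ℝ] ℝ | ∀ β ∈ closure KY, 0 ≤ S β} := by

  -- Step 1: `T` is strictly positive on nonzero elements of `closure KX`.
  have hstrict : ∀ β ∈ closure KX, β ≠ 0 → 0 < T β := by
    intro β hβ hβ0
    rw [mem_interior_iff_mem_nhds, Metric.mem_nhds_iff] at hT
    obtain ⟨ε, hε, hball⟩ := hT
    obtain ⟨g, hg1, hgβ⟩ := exists_dual_vector ℝ β (norm_ne_zero_iff.mpr hβ0)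
    have hgβ' : g β = ‖β‖ := by exact_mod_cast hgβ
    have hmem : T - (ε / 2) • g ∈ Metric.ball T ε := by
      have hn : ‖(ε / 2) • g‖ = ε / 2 := by
        have := norm_smul (ε / 2) g
        rw [this, hg1, mul_one, Real.norm_eq_abs, abs_of_pos (by linarith)]
      rw [Metric.mem_ball, dist_eq_norm, sub_sub_cancel_left, norm_neg, hn]
      linarith
    have h0 := hball hmem β hβ
    simp only [ContinuousLinearMap.sub_apply, ContinuousLinearMap.smul_apply, hgβ',
      smul_eq_mul] at h0
    have hnorm : (0:ℝ) < ‖β‖ := norm_pos_iff.mpr hβ0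
    nlinarith [h0]
  -- the closed cone property of `closure KY`
  have hclcone : ∀ β ∈ closure KY, ∀ t : ℝ, 0 < t → t • β ∈ closure KY := by
    intro β hβ t ht
    exact map_mem_closure (continuous_const_smul t) hβ (fun x hx => hKYcone x hx t ht)
  -- the compact base
  set K : Set W := Metric.sphere (0:W) 1 ∩ closure KY with hK
  have hKcpt : IsCompact K :=
    ((isCompact_sphere (0:W) 1).inter_right isClosed_closure)
  have hpos : ∀ β ∈ K, 0 < T (fstar β) := by
    intro β ⟨hβs, hβc⟩
    have hβ0 : β ≠ 0 := by
      intro h; rw [h] at hβs; simp at hβs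
    have hf0 : fstar β ≠ 0 := fun h => hβ0 (hinj (h.trans (map_zero fstar).symm))
    exact hstrict _ (hmaps β hβc) hf0
  by_cases hKne : K.Nonempty
  · -- take the minimum over the compact base
    obtain ⟨β₀, hβ₀K, hmin⟩ := hKcpt.exists_isMinOn hKne
      (Continuous.continuousOn (T.continuous.comp fstar.continuous))
    set m : ℝ := T (fstar β₀) with hm
    have hm0 : 0 < m := hpos β₀ hβ₀K
    rw [mem_interior_iff_mem_nhds, Metric.mem_nhds_iff]
    refine ⟨m, hm0, ?_⟩
    intro S hS β hβ
    rcases eq_or_ne β 0 with rfl | hβ0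
    · simp
    · have hnorm : (0:ℝ) < ‖β‖ := norm_pos_iff.mpr hβ0
      set β' : W := ‖β‖⁻¹ • β with hβ'
      have hβ'K : β' ∈ K := by
        constructor
        · simp [hβ', norm_smul, abs_of_pos (inv_pos.mpr hnorm), inv_mul_cancel₀ hnorm.ne']
        · exact hclcone β hβ _ (inv_pos.mpr hnorm)
      have hβ'n : ‖β'‖ = 1 := by simpa using hβ'K.1
      have h1 : m ≤ T (fstar β') := hmin hβ'K
      have h2 : |S β' - T (fstar β')| ≤ ‖S - T.comp fstar‖ := by
        have := (S - T.comp fstar).le_opNorm β'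
        simpa [hβ'n, Real.norm_eq_abs] using this
      have h3 : ‖S - T.comp fstar‖ < m := by
        simpa [dist_eq_norm] using (Metric.mem_ball.mp hS)
      have h4 : 0 ≤ S β' := by
        have := abs_le.mp h2
        linarith [this.1]
      have h5 : S β = ‖β‖ * S β' := by
        rw [hβ', map_smul, smul_eq_mul, ← mul_assoc, mul_inv_cancel₀ hnorm.ne', one_mul]
      rw [h5]
      positivity
  · -- degenerate case: `closure KY = {0}`
    have hall : ∀ β ∈ closure KY, β = (0:W) := by
      intro β hβ
      by_contra hβ0
      have hnorm : (0:ℝ) < ‖β‖ := norm_pos_iff.mpr hβ0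
      refine hKne ⟨‖β‖⁻¹ • β, ?_, hclcone β hβ _ (inv_pos.mpr hnorm)⟩
      simp [norm_smul, abs_of_pos (inv_pos.mpr hnorm), inv_mul_cancel₀ hnorm.ne']
    have : {S : W →L[ℝ] ℝ | ∀ β ∈ closure KY, 0 ≤ S β} = Set.univ := by
      ext S; simp only [Set.mem_setOf_eq, Set.mem_univ, iff_true]
      intro β hβ; rw [hall β hβ]; simp
    rw [this, interior_univ]
    trivial
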